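/- Let R be an associative unital (not necessarily commutative) ring, I a two-sided ideal of R, G a group, and φ : G →* Rˣ a group homomorphism such that (φ g : R) − 1 ∈ I for every g ∈ G. Then for every n ≥ 0 and every g in the n-th term of the lower central series of G (indexed so that the 0-th term is G itself), one has (φ g : R) − 1 ∈ I^(n+1). -/

import Mathlib

/-- The `m`-th power of a two-sided ideal `I` of a ring `R`, with `I ^ 0 = R` and
`I ^ (n+1)` the two-sided ideal generated by products `a * b` with `a ∈ I`, `b ∈ I ^ n`. -/
protected def TwoSidedIdeal.npow {R : Type*} [Ring R] (I : TwoSidedIdeal R) : ℕ → TwoSidedIdeal R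
  | 0 => ⊤
  | n + 1 => TwoSidedIdeal.span {x | ∃ a ∈ I, ∃ b ∈ TwoSidedIdeal.npow I n, x = a * b}

instance {R : Type*} [Ring R] : Pow (TwoSidedIdeal R) ℕ :=
  ⟨fun I n => TwoSidedIdeal.npow I n⟩

lemma pow_succ_def {R : Type*} [Ring R] (I : TwoSidedIdeal R) (n : ℕ) :
    I ^ (n + 1) = TwoSidedIdeal.span {x | ∃ a ∈ I, ∃ b ∈ I ^ n, x = a * b} := rfl

lemma mul_mem_pow_succ {R : Type*} [Ring R] (I : TwoSidedIdeal R) (n : ℕ)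
    {a b : R} (ha : a ∈ I) (hb : b ∈ I ^ n) : a * b ∈ I ^ (n + 1) := by
  rw [pow_succ_def]
  exact TwoSidedIdeal.subset_span ⟨a, ha, b, hb, rfl⟩

lemma pow_mul_pow_mem {R : Type*} [Ring R] (I : TwoSidedIdeal R) :
    ∀ m k : ℕ, ∀ {a b : R}, a ∈ I ^ m → b ∈ I ^ k → a * b ∈ I ^ (m + k) := by
  intro m
  induction m with
  | zero => intro k a b _ hb; simpa using (I ^ k).mul_mem_left a b hb
  | succ m ih =>
    intro k a b ha hb
    -- consider the two-sided ideal of elements r with r * c ∈ I ^ (m+1+k) for all c ∈ I ^ k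
    set K : TwoSidedIdeal R := TwoSidedIdeal.mk'
      {r | ∀ c ∈ I ^ k, r * c ∈ I ^ (m + 1 + k)}
      (by intro c hc; simpa using (I ^ (m + 1 + k)).zero_mem)
      (by intro x y hx hy c hc; rw [add_mul]; exact (I ^ (m+1+k)).add_mem (hx c hc) (hy c hc))
      (by intro x hx c hc; rw [neg_mul]; exact (I ^ (m+1+k)).neg_mem (hx c hc))
      (by intro x y hy c hc; rw [mul_assoc]; exact (I ^ (m+1+k)).mul_mem_left x _ (hy c hc))
      (by intro x y hx c hc; rw [mul_assoc]; exact hx _ ((I ^ k).mul_mem_left y c hc)) with hK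
    have haK : a ∈ K := by
      rw [pow_succ_def] at ha
      refine (TwoSidedIdeal.mem_span_iff.mp ha) K ?_
      rintro x ⟨p, hp, q, hq, rfl⟩
      simp only [SetLike.mem_coe, hK, TwoSidedIdeal.mem_mk']
      intro c hc
      rw [mul_assoc]
      have : q * c ∈ I ^ (m + k) := ih k hq hc
      have h2 : p * (q * c) ∈ I ^ (m + k + 1) := mul_mem_pow_succ I _ hp this
      convert h2 using 2
      omega
    rw [hK, TwoSidedIdeal.mem_mk'] at haK
    exact haK b hb

lemma mem_pow_one {R : Type*} [Ring R] (I : TwoSidedIdeal R) {a : R} (ha : a ∈ I) :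
    a ∈ I ^ 1 := by
  have := mul_mem_pow_succ I 0 ha (by trivial : (1 : R) ∈ I ^ 0)
  simpa using this

theorem stmt5 {R : Type*} [Ring R] (I : TwoSidedIdeal R)
    {G : Type*} [Group G] (φ : G →* Rˣ)
    (hφ : ∀ g : G, ((φ g : Rˣ) : R) - 1 ∈ I) :
    ∀ n : ℕ, ∀ g ∈ (⊤ : Subgroup G).lowerCentralSeries n, ((φ g : Rˣ) : R) - 1 ∈ I ^ (n + 1) := by
  intro n
  induction n with
  | zero => intro g _; exact mem_pow_one I (hφ g)
  | succ n ih =>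
    set J := I ^ (n + 2) with hJ
    -- The set of g with φ g - 1 ∈ J forms a subgroup.
    set H : Subgroup G :=
      { carrier := {g | ((φ g : Rˣ) : R) - 1 ∈ J}
        one_mem' := by simp [J.zero_mem]
        mul_mem' := by
          intro x y hx hy
          have key : ((φ (x * y) : Rˣ) : R) - 1 =
              (((φ x : Rˣ) : R) - 1) * (((φ y : Rˣ) : R) - 1)
                + (((φ x : Rˣ) : R) - 1) + (((φ y : Rˣ) : R) - 1) := by
            push_cast [map_mul]
            noncomm_ring
          rw [Set.mem_setOf_eq, key]
          exact J.add_mem (J.add_mem (J.mul_mem_right _ _ hx) hx) hy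
        inv_mem' := by
          intro x hx
          have key : ((φ x⁻¹ : Rˣ) : R) - 1 =
              -(((φ x⁻¹ : Rˣ) : R) * (((φ x : Rˣ) : R) - 1)) := by
            have : ((φ x⁻¹ : Rˣ) : R) * ((φ x : Rˣ) : R) = 1 := by
              rw [← Units.val_mul, ← map_mul, inv_mul_cancel, map_one, Units.val_one]
            rw [mul_sub, this, mul_one, neg_sub]
          rw [Set.mem_setOf_eq, key]
          exact J.neg_mem (J.mul_mem_left _ _ hx) } with hH
    intro g hg
    have hle : (⊤ : Subgroup G).lowerCentralSeries (n + 1) ≤ H := by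
      rw [Subgroup.lowerCentralSeries_succ, Subgroup.commutator_def]
      rw [Subgroup.closure_le]
      rintro x ⟨p, hp, q, _, rfl⟩
      show ((φ (p * q * p⁻¹ * q⁻¹) : Rˣ) : R) - 1 ∈ J
      set a : R := ((φ p : Rˣ) : R) with ha
      set b : R := ((φ q : Rˣ) : R) with hb
      set a' : R := ((φ p⁻¹ : Rˣ) : R) with ha'
      set b' : R := ((φ q⁻¹ : Rˣ) : R) with hb'
      have haa' : a * a' = 1 := by
        rw [ha, ha', ← Units.val_mul, ← map_mul, mul_inv_cancel, map_one, Units.val_one]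
      have hbb' : b * b' = 1 := by
        rw [hb, hb', ← Units.val_mul, ← map_mul, mul_inv_cancel, map_one, Units.val_one]
      have key : ((φ (p * q * p⁻¹ * q⁻¹) : Rˣ) : R) - 1 =
          ((a - 1) * (b - 1) - (b - 1) * (a - 1)) * (a' * b') := by
        have expand : ((a - 1) * (b - 1) - (b - 1) * (a - 1)) = a * b - b * a := by noncomm_ring
        rw [expand]
        have : (a * b - b * a) * (a' * b') = a * b * a' * b' - b * (a * a') * b' := by noncomm_ring
        rw [this, haa', mul_one, hbb']
        push_cast [map_mul]
        noncomm_ring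
      rw [key]
      have h1 : (a - 1) * (b - 1) ∈ J := by
        have := pow_mul_pow_mem I (n + 1) 1 (ih p hp) (mem_pow_one I (hφ q))
        exact this
      have h2 : (b - 1) * (a - 1) ∈ J :=
        mul_mem_pow_succ I (n + 1) (hφ q) (ih p hp)
      exact J.mul_mem_right _ _ (J.sub_mem h1 h2)
    exact hle hg
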